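/- Let m be a nonzero integer which is not a perfect square. Write |m| = s·t² with s squarefree and t a positive integer, and write s = 2^j·r with r odd and j ∈ {0,1}. Then there exists a set S of residue classes modulo 8r with #S = 2·φ(r) (φ the Euler totient) such that for every odd prime p not dividing 2m, the Legendre symbol (m|p) equals −1 if and only if the class of p modulo 8r belongs to S; moreover for every such p, (m|p) = 1 if and only if the class of p modulo 8r belongs to a complementary set of exactly 2·φ(r) classes. -/

import Mathlib

open scoped NumberTheorySymbols

private lemma jacCongr (d : ℤ) {N : ℕ} (hN : (4 * d.natAbs) ∣ N) {b b' : ℕ}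
    (hb : Odd b) (hb' : Odd b') (h : b ≡ b' [MOD N]) : J(d | b) = J(d | b') := by
  rw [jacobiSym.mod_right d hb, jacobiSym.mod_right d hb',
    show b % (4 * d.natAbs) = b' % (4 * d.natAbs) from h.of_dvd hN]

private lemma odd_of_coprime_8r {n r : ℕ} (h : Nat.Coprime n (8 * r)) : Odd n := by
  have h2 : Nat.Coprime n 2 := Nat.Coprime.coprime_dvd_right (⟨4*r, by ring⟩ : (2:ℕ) ∣ 8*r) h
  exact Nat.coprime_two_right.mp h2

private lemma mainLemma (d : ℤ) (r : ℕ) (hr : Odd r)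
    (hdvd : (4 * d.natAbs) ∣ 8 * r)
    (b₀ : ℕ) (hb₀ : Nat.Coprime b₀ (8 * r)) (hb₀j : J(d | b₀) = -1) :
    ∃ S T : Finset (ZMod (8 * r)), Disjoint S T ∧
      S.card = 2 * Nat.totient r ∧ T.card = 2 * Nat.totient r ∧
      ∀ n : ℕ, Nat.Coprime n (8 * r) →
        ((J(d | n) = -1 ↔ ((n : ZMod (8 * r)) ∈ S)) ∧
         (J(d | n) = 1 ↔ ((n : ZMod (8 * r)) ∈ T))) := by
  have hrpos : 0 < r := Nat.pos_of_ne_zero (by rintro rfl; exact (Nat.not_odd_iff_even.mpr ⟨0, rfl⟩) hr)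
  haveI : NeZero (8 * r) := ⟨by positivity⟩
  set N := 8 * r with hN
  -- the character
  set χ : (ZMod N)ˣ → ℤ := fun u => J(d | ((u : ZMod N).val)) with hχ
  have hodd : ∀ u : (ZMod N)ˣ, Odd ((u : ZMod N).val) := fun u =>
    odd_of_coprime_8r (ZMod.val_coe_unit_coprime u)
  have hkey : ∀ (n : ℕ) (h : Nat.Coprime n N), χ (ZMod.unitOfCoprime n h) = J(d | n) := by
    intro n h
    have : ((ZMod.unitOfCoprime n h : (ZMod N)ˣ) : ZMod N) = (n : ZMod N) :=
      ZMod.coe_unitOfCoprime n h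
    rw [hχ]
    simp only [this]
    refine jacCongr d hdvd ?_ (odd_of_coprime_8r h) ?_
    · rw [ZMod.val_natCast]
      rw [Nat.odd_iff] at *
      rw [Nat.mod_mod_of_dvd n (⟨4*r, by ring⟩ : (2:ℕ) ∣ N)]
      exact Nat.odd_iff.mp (odd_of_coprime_8r h)
    · rw [ZMod.val_natCast]
      exact (Nat.mod_modEq n N)
  have hmul : ∀ u v : (ZMod N)ˣ, χ (u * v) = χ u * χ v := by
    intro u v
    haveI : NeZero ((u : ZMod N).val) := ⟨(hodd u).pos.ne'⟩
    haveI : NeZero ((v : ZMod N).val) := ⟨(hodd v).pos.ne'⟩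
    have h1 : χ (u * v) = J(d | (u : ZMod N).val * (v : ZMod N).val) := by
      refine jacCongr d hdvd (hodd _) ((hodd u).mul (hodd v)) ?_
      rw [Units.val_mul, ZMod.val_mul]
      exact Nat.mod_modEq _ N
    rw [h1, jacobiSym.mul_right]
  have hval : ∀ u : (ZMod N)ˣ, χ u = 1 ∨ χ u = -1 := by
    intro u
    refine jacobiSym.eq_one_or_neg_one ?_
    have h1 : Nat.Coprime ((u : ZMod N).val) d.natAbs :=
      Nat.Coprime.coprime_dvd_right (dvd_trans (dvd_mul_left _ 4) hdvd)
        (ZMod.val_coe_unit_coprime u)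
    exact Nat.Coprime.symm h1
  -- the distinguished unit with character value -1
  set u₀ : (ZMod N)ˣ := ZMod.unitOfCoprime b₀ hb₀ with hu₀
  have hu₀v : χ u₀ = -1 := by rw [hu₀, hkey b₀ hb₀]; exact hb₀j
  set Su : Finset (ZMod N)ˣ := Finset.univ.filter (fun u => χ u = -1) with hSu
  set Tu : Finset (ZMod N)ˣ := Finset.univ.filter (fun u => χ u = 1) with hTu
  have hmemS : ∀ u, u ∈ Su ↔ χ u = -1 := by
    intro u; rw [hSu, Finset.mem_filter]; simp only [Finset.mem_univ, true_and]
  have hmemT : ∀ u, u ∈ Tu ↔ χ u = 1 := by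
    intro u; rw [hTu, Finset.mem_filter]; simp only [Finset.mem_univ, true_and]
  have hcards : Su.card = Tu.card := by
    refine (Finset.card_bij' (fun u _ => u₀ * u) (fun v _ => u₀⁻¹ * v) ?_ ?_ ?_ ?_).symm
    · intro u hu
      rw [hmemT] at hu
      rw [hmemS, hmul, hu₀v, hu]; ring
    · intro v hv
      rw [hmemS] at hv
      rw [hmemT]
      rcases hval (u₀⁻¹ * v) with h | h
      · exact h
      · exfalso
        have := hmul u₀ (u₀⁻¹ * v)
        rw [mul_inv_cancel_left, hu₀v, h, hv] at this
        norm_num at this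
    · intro u _; group
    · intro v _; group
  have hsum : Su.card + Tu.card = 4 * Nat.totient r := by
    have h1 : Su.card + Tu.card = Fintype.card (ZMod N)ˣ := by
      rw [← Finset.card_univ]
      have h2 : Tu = Finset.univ.filter (fun u => ¬ χ u = -1) := by
        apply Finset.filter_congr
        intro u _
        rcases hval u with h | h <;> simp [h]
      rw [h2]
      exact Finset.card_filter_add_card_filter_not _
    rw [h1, ZMod.card_units_eq_totient, hN,
      Nat.totient_mul (Nat.Coprime.pow_left 3 (Nat.coprime_two_left.mpr hr) : Nat.Coprime 8 r),
      show Nat.totient 8 = 4 from by decide]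
  have hScard : Su.card = 2 * Nat.totient r := by omega
  have hTcard : Tu.card = 2 * Nat.totient r := by omega
  set coeF : (ZMod N)ˣ → ZMod N := (fun u => (u : ZMod N)) with hcoeF
  have hinj : Function.Injective coeF := fun a b h => Units.ext h
  refine ⟨Su.image coeF, Tu.image coeF, ?_, ?_, ?_, ?_⟩
  · rw [Finset.disjoint_left]
    rintro x hx hx'
    obtain ⟨u, hu, hux⟩ := Finset.mem_image.mp hx
    obtain ⟨v, hv, hvx⟩ := Finset.mem_image.mp hx'
    have : u = v := hinj (hux.trans hvx.symm)
    rw [hmemS] at hu; rw [hmemT] at hv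
    rw [this, hv] at hu; norm_num at hu
  · rw [Finset.card_image_of_injective _ hinj]; exact hScard
  · rw [Finset.card_image_of_injective _ hinj]; exact hTcard
  · intro n hn
    set un := ZMod.unitOfCoprime n hn with hun
    have hcoe : ((un : (ZMod N)ˣ) : ZMod N) = (n : ZMod N) := ZMod.coe_unitOfCoprime n hn
    constructor
    · constructor
      · intro h
        refine Finset.mem_image.mpr ⟨un, ?_, hcoe⟩
        rw [hmemS, hkey n hn]; exact h
      · intro h
        obtain ⟨u, hu, hux⟩ := Finset.mem_image.mp h
        have : u = un := hinj (hux.trans hcoe.symm)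
        rw [this, hmemS, hkey n hn] at hu
        exact hu
    · constructor
      · intro h
        refine Finset.mem_image.mpr ⟨un, ?_, hcoe⟩
        rw [hmemT, hkey n hn]; exact h
      · intro h
        obtain ⟨u, hu, hux⟩ := Finset.mem_image.mp h
        have : u = un := hinj (hux.trans hcoe.symm)
        rw [this, hmemT, hkey n hn] at hu
        exact hu

private lemma existsB (ε : ℤ) (hε : ε = 1 ∨ ε = -1) (j r : ℕ) (hj : j ≤ 1) (hr : Odd r)
    (hrsq : Squarefree r) (hne : ε * 2 ^ j * (r : ℤ) ≠ 1) :
    ∃ b : ℕ, Nat.Coprime b (8 * r) ∧ J(ε * 2 ^ j * (r : ℤ) | b) = -1 := by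
  rcases eq_or_ne r 1 with rfl | hr1
  · -- r = 1 : the symbol is that of ε * 2^j ∈ {-1, 2, -2}
    interval_cases j <;> rcases hε with rfl | rfl <;> norm_num at hne <;> norm_num
    · -- ε = -1, j = 0 : d = -1, take b = 3
      refine ⟨3, by decide, ?_⟩
      rw [show ((-1 : ℤ)) = ((-1 : ℤ)) from rfl, jacobiSym.at_neg_one (by decide : Odd 3),
        ZMod.χ₄_nat_three_mod_four (by decide)]
    · -- ε = 1, j = 1 : d = 2, take b = 5
      refine ⟨5, by decide, ?_⟩
      rw [jacobiSym.at_two (by decide : Odd 5)]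
      decide
    · -- ε = -1, j = 1 : d = -2, take b = 5
      refine ⟨5, by decide, ?_⟩
      rw [jacobiSym.at_neg_two (by decide : Odd 5)]
      decide
  · -- r > 1 : use a nonresidue modulo the smallest prime factor of r
    set q := r.minFac with hqdef
    have hq : q.Prime := Nat.minFac_prime hr1
    have hqdvd : q ∣ r := Nat.minFac_dvd r
    set c := r / q with hcdef
    have hrc : r = q * c := (Nat.mul_div_cancel' hqdvd).symm
    have hrpos : 0 < r := hr.pos
    have hc0 : c ≠ 0 := by rintro h; rw [h, mul_zero] at hrc; omega
    have hq2 : q ≠ 2 := by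
      rintro h
      have : (2 : ℕ) ∣ r := h ▸ hqdvd
      rw [Nat.odd_iff] at hr
      omega
    have hqc : Nat.Coprime q c := by
      have := hrc ▸ hrsq
      exact (Nat.squarefree_mul_iff.mp this).1
    haveI : Fact q.Prime := ⟨hq⟩
    obtain ⟨a, ha⟩ := FiniteField.exists_nonsquare
      (by rw [ZMod.ringChar_zmod_n]; exact hq2 : ringChar (ZMod q) ≠ 2)
    have ha0 : a ≠ 0 := by rintro rfl; exact ha ⟨0, by ring⟩
    -- CRT construction
    obtain ⟨b', hb'q, hb'c⟩ := Nat.chineseRemainder hqc a.val 1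
    have hcop8r : Nat.Coprime 8 r := Nat.Coprime.pow_left 3 (Nat.coprime_two_left.mpr hr)
    obtain ⟨b, hb8', hbr⟩ := Nat.chineseRemainder hcop8r 1 b'
    have hbq : b ≡ a.val [MOD q] := (hbr.of_dvd hqdvd).trans hb'q
    have hbc : b ≡ 1 [MOD c] := (hbr.of_dvd ⟨q, by rw [hrc]; ring⟩).trans hb'c
    have hb8 : b % 8 = 1 := by have := hb8'; unfold Nat.ModEq at this; simpa using this
    have hbodd : Odd b := by
      rw [Nat.odd_iff]
      have := Nat.mod_mod_of_dvd b (by norm_num : (2 : ℕ) ∣ 8)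
      omega
    have hb4 : b % 4 = 1 := by
      have := Nat.mod_mod_of_dvd b (by norm_num : (4 : ℕ) ∣ 8)
      omega
    -- coprimality
    have copq : Nat.Coprime b q := by
      rw [Nat.coprime_comm, Nat.Prime.coprime_iff_not_dvd hq]
      intro hdvd
      apply ha0
      have h1 : b % q = 0 := Nat.dvd_iff_mod_eq_zero.mp hdvd
      have h2 : a.val % q = 0 := by rw [← hbq]; exact h1
      have h3 : a.val = 0 := by rw [Nat.mod_eq_of_lt (ZMod.val_lt a)] at h2; exact h2
      exact (ZMod.val_eq_zero a).mp h3
    have copc : Nat.Coprime b c := by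
      rw [← ZMod.isUnit_iff_coprime]
      have : ((b : ZMod c)) = ((1 : ℕ) : ZMod c) := (ZMod.natCast_eq_natCast_iff _ _ _).mpr hbc
      rw [this, Nat.cast_one]
      exact isUnit_one
    have cop : Nat.Coprime b (8 * r) := by
      refine Nat.Coprime.mul_right (Nat.Coprime.pow_right 3 (Nat.coprime_two_right.mpr hbodd)) ?_
      rw [hrc]
      exact Nat.Coprime.mul_right copq copc
    -- Jacobi symbol computation
    have hjq : J((b : ℕ) | q) = -1 := by
      have hmod : ((b : ℕ) : ℤ) % (q : ℤ) = ((a.val : ℕ) : ℤ) % (q : ℤ) := by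
        rw [← Int.natCast_mod, ← Int.natCast_mod, hbq]
      rw [jacobiSym.mod_left' hmod, ← jacobiSym.legendreSym.to_jacobiSym]
      rw [legendreSym.eq_neg_one_iff]
      convert ha using 2
      push_cast
      simp [ZMod.natCast_val, ZMod.cast_id]
    have hjc : J((b : ℕ) | c) = 1 := by
      have hmod : ((b : ℕ) : ℤ) % (c : ℤ) = (1 : ℤ) % (c : ℤ) := by
        rw [show (1 : ℤ) = ((1 : ℕ) : ℤ) from rfl, ← Int.natCast_mod, ← Int.natCast_mod, hbc]
      rw [jacobiSym.mod_left' hmod, jacobiSym.one_left]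
    have hjr : J((r : ℕ) | b) = -1 := by
      rw [jacobiSym.quadratic_reciprocity_one_mod_four' hr hb4, hrc,
        jacobiSym.mul_right' (b : ℤ) hq.ne_zero hc0, hjq, hjc, mul_one]
    refine ⟨b, cop, ?_⟩
    rw [jacobiSym.mul_left, jacobiSym.mul_left, hjr]
    have hjε : J(ε | b) = 1 := by
      rcases hε with rfl | rfl
      · exact jacobiSym.one_left b
      · rw [jacobiSym.at_neg_one hbodd, ZMod.χ₄_nat_one_mod_four hb4]
    have hj2 : J((2 : ℤ) ^ j | b) = 1 := by
      rw [jacobiSym.pow_left, jacobiSym.at_two hbodd, ZMod.χ₈_nat_mod_eight, hb8,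
        show ZMod.χ₈ ((1 : ℕ) : ZMod 8) = 1 from by decide, one_pow]
    rw [hjε, hj2]
    ring

/-- For a fixed nonsquare integer `m` with `|m| = s t²`, `s = 2^j r` squarefree,
`r` odd, the primes `p ∤ 2m` with `(m|p) = -1` are exactly those lying in a set of
`2 φ(r)` residue classes mod `8r`, and those with `(m|p) = 1` are exactly those in
a complementary set of `2 φ(r)` classes. -/
theorem stmt_15 (m s t : ℤ) (j r : ℕ)
    (hm : m ≠ 0) (hns : ¬∃ u : ℤ, u ^ 2 = m)
    (hdecomp : |m| = s * t ^ 2) (hs : Squarefree s) (ht : 0 < t)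
    (hj : j ≤ 1) (hr : Odd r) (hsr : s = 2 ^ j * (r : ℤ)) :
    ∃ S T : Finset (ZMod (8 * r)), Disjoint S T ∧
      S.card = 2 * Nat.totient r ∧ T.card = 2 * Nat.totient r ∧
      ∀ p : ℕ, ∀ hp : p.Prime, Odd p → ¬((p : ℤ) ∣ 2 * m) →
        ((@legendreSym p ⟨hp⟩ m = -1 ↔ ((p : ℕ) : ZMod (8 * r)) ∈ S) ∧
         (@legendreSym p ⟨hp⟩ m = 1 ↔ ((p : ℕ) : ZMod (8 * r)) ∈ T)) := by
  obtain ⟨ε, hε, hmd⟩ : ∃ ε : ℤ, (ε = 1 ∨ ε = -1) ∧ m = (ε * s) * t ^ 2 := by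
    rcases abs_choice m with h | h
    · exact ⟨1, Or.inl rfl, by rw [show m = |m| from h.symm, hdecomp]; ring⟩
    · exact ⟨-1, Or.inr rfl, by rw [show m = -|m| from by omega, hdecomp]; ring⟩
  have hmd' : m = (ε * 2 ^ j * (r : ℤ)) * t ^ 2 := by rw [hmd, hsr]; ring
  have hne : ε * 2 ^ j * (r : ℤ) ≠ 1 := by
    intro h
    exact hns ⟨t, by rw [hmd', h]; ring⟩
  have hrsqf : Squarefree r := by
    have h1 : Squarefree ((r : ℤ)) := hs.squarefree_of_dvd ⟨2 ^ j, by rw [hsr]; ring⟩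
    exact Int.squarefree_natCast.mp h1
  obtain ⟨b, hbcop, hbj⟩ := existsB ε hε j r hj hr hrsqf hne
  have hdvd : 4 * (ε * 2 ^ j * (r : ℤ)).natAbs ∣ 8 * r := by
    have hnatAbs : (ε * 2 ^ j * (r : ℤ)).natAbs = 2 ^ j * r := by
      rcases hε with rfl | rfl <;> simp [Int.natAbs_mul, Int.natAbs_pow]
    rw [hnatAbs]
    interval_cases j
    · exact ⟨2, by ring⟩
    · exact ⟨1, by ring⟩
  obtain ⟨S, T, hdisj, hScard, hTcard, hmem⟩ := mainLemma (ε * 2 ^ j * (r : ℤ)) r hr hdvd b hbcop hbj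
  refine ⟨S, T, hdisj, hScard, hTcard, ?_⟩
  intro p hp hodd hpdvd
  haveI : Fact p.Prime := ⟨hp⟩
  have hpm : ¬ ((p : ℤ) ∣ m) := fun h => hpdvd (Dvd.dvd.mul_left h 2)
  have hpcop : Nat.Coprime p (8 * r) := by
    rw [Nat.Prime.coprime_iff_not_dvd hp]
    intro hdv
    rcases (Nat.Prime.dvd_mul hp).mp hdv with h8 | hr'
    · have hp2 : p ∣ 2 := hp.dvd_of_dvd_pow (show p ∣ 2 ^ 3 from by norm_num; exact h8)
      have : p = 2 := (Nat.prime_dvd_prime_iff_eq hp Nat.prime_two).mp hp2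
      rw [this, Nat.odd_iff] at hodd
      omega
    · apply hpm
      have h1 : (p : ℤ) ∣ (r : ℤ) := Int.natCast_dvd_natCast.mpr hr'
      exact h1.trans (dvd_trans ⟨ε * 2 ^ j, by ring⟩ ⟨t ^ 2, hmd'⟩)
  have hLm : legendreSym p m = J(ε * 2 ^ j * (r : ℤ) | p) := by
    have htne : ((t : ZMod p)) ≠ 0 := by
      intro h
      apply hpm
      have h1 : (p : ℤ) ∣ t := (ZMod.intCast_zmod_eq_zero_iff_dvd t p).mp h
      exact dvd_trans h1 ⟨(ε * 2 ^ j * (r : ℤ)) * t, by rw [hmd']; ring⟩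
    rw [hmd', legendreSym.mul, legendreSym.sq_one' p htne, mul_one,
      jacobiSym.legendreSym.to_jacobiSym]
  obtain ⟨h1, h2⟩ := hmem p hpcop
  rw [← hLm] at h1 h2
  exact ⟨h1, h2⟩
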